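/- Let G, V, Z be three distinct collinear points of ℝ² with G − Z = (5/4)(V − G), let P be a point not on line GZ, and define Q′ := G − (1/2)(P − G), P′ := 2Q′ − V, Q := midpoint(P, V), S := G − (1/2)(Z − G). Let q(X) = B(X − Z, X − Z) + c (B a nonzero symmetric bilinear form, c ∈ ℝ) vanish at P, P′, Q, Q′, and assume Q ≠ S. Then the line through Q and S meets the conic q = 0 only at Q: for every real t, q(Q + t(S − Q)) = 0 implies t = 0. -/

import Mathlib

set_option maxHeartbeats 1000000 in
/-- Lemma 3.2: if `ZG/GV = 5/4` then the line `Q K(Z)` meets the conic only at `Q`,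
i.e. it is the tangent to the conic at `Q`. -/
theorem tangent_at_Q_is_QKZ (G V Z : ℝ × ℝ)
    (hcol : Collinear ℝ ({G, V, Z} : Set (ℝ × ℝ)))
    (hGV : G ≠ V) (hVZ : V ≠ Z) (hGZ : G ≠ Z)
    (hratio : G - Z = (5/4 : ℝ) • (V - G))
    (P : ℝ × ℝ) (hP : P ∉ line[ℝ, G, Z])
    (Q' P' Q S : ℝ × ℝ)
    (hQ' : Q' = G - (1/2 : ℝ) • (P - G))
    (hP' : P' = (2 : ℝ) • Q' - V)
    (hQ : Q = midpoint ℝ P V)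
    (hS : S = G - (1/2 : ℝ) • (Z - G))
    (B : (ℝ × ℝ) →ₗ[ℝ] (ℝ × ℝ) →ₗ[ℝ] ℝ) (c : ℝ)
    (hB : B ≠ 0) (hBsymm : ∀ u v, B u v = B v u)
    (hvanish : ∀ X ∈ ({P, P', Q, Q'} : Set (ℝ × ℝ)), B (X - Z) (X - Z) + c = 0)
    (hQS : Q ≠ S) :
    ∀ t : ℝ, B (Q + t • (S - Q) - Z) (Q + t • (S - Q) - Z) + c = 0 → t = 0 := by
  intro t ht
  have hQmid : Q = (1/2:ℝ) • (P + V) := by rw [hQ, midpoint_eq_smul_add]; norm_num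
  set u : ℝ × ℝ := P - G with hu
  set w : ℝ × ℝ := V - G with hw
  -- expansion of B on combinations of u, w
  have hexp : ∀ (α β γ δ : ℝ), B (α • u + β • w) (γ • u + δ • w)
      = α*γ*(B u u) + (α*δ + β*γ)*(B u w) + β*δ*(B w w) := by
    intro α β γ δ
    simp only [map_add, map_smul, LinearMap.add_apply, LinearMap.smul_apply,
      smul_eq_mul, hBsymm w u]
    ring
  -- rewrite the points relative to Z
  have hPZ : P - Z = (1:ℝ) • u + (5/4:ℝ) • w := by
    rw [hu, hw]; linear_combination (norm := module) hratio
  have hP'Z : P' - Z = (-1:ℝ) • u + (1/4:ℝ) • w := by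
    rw [hu, hw, hP', hQ']; linear_combination (norm := module) hratio
  have hQZ : Q - Z = (1/2:ℝ) • u + (7/4:ℝ) • w := by
    rw [hu, hw, hQmid]; linear_combination (norm := module) hratio
  have hQ'Z : Q' - Z = (-(1/2):ℝ) • u + (5/4:ℝ) • w := by
    rw [hu, hw, hQ']; linear_combination (norm := module) hratio
  have hLZ : Q + t • (S - Q) - Z = ((1-t)/2) • u + (7/4 + t/8) • w := by
    rw [hu, hw, hQmid, hS]
    linear_combination (norm := module) (1 + t/2 : ℝ) • hratio
  have e1 := hvanish P (by simp)
  have e2 := hvanish P' (by simp)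
  have e3 := hvanish Q (by simp)
  have e4 := hvanish Q' (by simp)
  rw [hPZ, hexp] at e1
  rw [hP'Z, hexp] at e2
  rw [hQZ, hexp] at e3
  rw [hQ'Z, hexp] at e4
  rw [hLZ, hexp] at ht
  -- solve the linear system
  have ha : B u u = -5 * B u w := by linarith
  have he : B w w = -2 * B u w := by linarith
  have hc : c = (45/8) * B u w := by linarith
  -- B u w ≠ 0
  have hb : B u w ≠ 0 := by
    intro hb0
    have ha0 : B u u = 0 := by rw [ha, hb0]; ring
    have he0 : B w w = 0 := by rw [he, hb0]; ring
    -- u and w are linearly independent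
    have hwne : w ≠ 0 := sub_ne_zero.mpr hGV.symm
    have hdet : u.1 * w.2 - u.2 * w.1 ≠ 0 := by
      intro hdet0
      -- then u = k • w for some k, so P lies on line GZ
      obtain ⟨k, hk⟩ : ∃ k : ℝ, u = k • w := by
        rcases eq_or_ne w.1 0 with h1 | h1
        · have h2 : w.2 ≠ 0 := fun h2 => hwne (Prod.ext h1 h2)
          have hu1 : u.1 = 0 := by
            have : u.1 * w.2 = 0 := by rw [h1] at hdet0; linarith
            exact (mul_eq_zero.mp this).resolve_right h2
          refine ⟨u.2 / w.2, Prod.ext ?_ ?_⟩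
          · simp [h1, hu1]
          · simp only [Prod.smul_snd, smul_eq_mul]
            field_simp
        · refine ⟨u.1 / w.1, Prod.ext ?_ ?_⟩
          · simp only [Prod.smul_fst, smul_eq_mul]
            field_simp
          · simp only [Prod.smul_snd, smul_eq_mul]
            field_simp
            nlinarith [hdet0]
      apply hP
      have hPeq : P = AffineMap.lineMap G Z (-(4/5)*k) := by
        rw [AffineMap.lineMap_apply_module]
        have hPu : P = u + G := by rw [hu]; abel
        rw [hPu, hk]
        linear_combination (norm := module) (-(4/5)*k : ℝ) • hratio
      rw [hPeq]
      exact AffineMap.lineMap_mem_affineSpan_pair _ _ _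
    -- every vector is a combination of u and w
    have hrep : ∀ x : ℝ × ℝ, ∃ a b : ℝ, x = a • u + b • w := by
      intro x
      refine ⟨(x.1*w.2 - x.2*w.1)/(u.1*w.2 - u.2*w.1),
        (u.1*x.2 - u.2*x.1)/(u.1*w.2 - u.2*w.1), Prod.ext ?_ ?_⟩ <;>
      · simp only [Prod.fst_add, Prod.snd_add, Prod.smul_fst, Prod.smul_snd, smul_eq_mul]
        have hD : w.2 * u.1 - w.1 * u.2 ≠ 0 := by intro h; apply hdet; linarith
        field_simp
        ring
    apply hB
    apply LinearMap.ext; intro x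
    apply LinearMap.ext; intro y
    simp only [LinearMap.zero_apply]
    obtain ⟨a1, b1, hx⟩ := hrep x
    obtain ⟨a2, b2, hy⟩ := hrep y
    rw [hx, hy, hexp, ha0, he0, hb0]
    ring
  -- conclude
  have hzero : B u w * t^2 = 0 := by
    rw [ha, he, hc] at ht
    linear_combination (-(32/45) : ℝ) * ht
  have ht2 : t^2 = 0 := (mul_eq_zero.mp hzero).resolve_left hb
  exact pow_eq_zero_iff (two_ne_zero) |>.mp ht2
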